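/- Let m ∈ ℝ and let f : V₀ → ℝ be such that every point of Γ_f lies on a horizontal line of slope m (i.e., with direction (1, m, 0)) contained in Γ_f. Then there exists c ∈ ℝ such that f(x, 0, z) = m·x + c for all x, z ∈ ℝ; equivalently, Γ_f is the vertical plane {(x, m·x + c, z) : x, z ∈ ℝ}. -/
import Mathlib


open MeasureTheory Filter

noncomputable section

/-- The Heisenberg group, identified with `ℝ³`. -/
abbrev H : Type := ℝ × ℝ × ℝ

/-- Heisenberg group multiplication. -/
def Hmul (p q : H) : H :=
  (p.1 + q.1, p.2.1 + q.2.1, p.2.2 + q.2.2 + (p.1 * q.2.1 - p.2.1 * q.1) / 2)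

/-- Heisenberg group inverse. -/
def Hinv (p : H) : H := (-p.1, -p.2.1, -p.2.2)

/-- The intrinsic projection `Π : ℍ → V₀`. -/
def Proj (p : H) : H := (p.1, 0, p.2.2 - p.1 * p.2.1 / 2)

/-- The `xz`-plane `V₀`. -/
def V0 : Set H := {p : H | p.2.1 = 0}

/-- The intrinsic graph of `f` over `D ⊆ V₀`. -/
def IGraph (D : Set H) (f : H → ℝ) : Set H :=
  {q : H | ∃ x z : ℝ, ((x, (0 : ℝ), z) ∈ D) ∧
    q = (x, f (x, 0, z), z + x * f (x, 0, z) / 2)}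

/-- The horizontal line through `p` with slope `m` (direction `(1, m, 0)`). -/
def horizLine (p : H) (m : ℝ) : Set H := {q : H | ∃ t : ℝ, q = Hmul p (t, t * m, 0)}

/-- The horizontal line through `p` with direction `(a, b, 0)`. -/
def horizLineGen (p : H) (a b : ℝ) : Set H := {q : H | ∃ t : ℝ, q = Hmul p (t * a, t * b, 0)}

/-- `Γ_f` is ruled: every point of `Γ_f` lies on a horizontal line contained in `Γ_f`. -/
def IsRuled (S : Set H) : Prop :=
  ∀ p ∈ S, ∃ q : H, ∃ a b : ℝ, (a, b) ≠ ((0 : ℝ), (0 : ℝ)) ∧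
    p ∈ horizLineGen q a b ∧ horizLineGen q a b ⊆ S


lemma mem_IGraph_iff (f : H → ℝ) (p : H) :
    p ∈ IGraph V0 f ↔ p.2.1 = f (p.1, 0, p.2.2 - p.1 * p.2.1 / 2) := by
  constructor
  · rintro ⟨x, z, -, rfl⟩
    simp only
    have hz : z + x * f (x, 0, z) / 2 - x * f (x, 0, z) / 2 = z := by ring
    rw [hz]
  · intro h
    refine ⟨p.1, p.2.2 - p.1 * p.2.1 / 2, rfl, ?_⟩
    have h2 : p.2.2 - p.1 * p.2.1 / 2 + p.1 * p.2.1 / 2 = p.2.2 := by ring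
    rw [← h, h2]

lemma key_translate (m : ℝ) (f : H → ℝ)
    (hruled : ∀ p ∈ IGraph V0 f, ∃ q : H,
      p ∈ horizLine q m ∧ horizLine q m ⊆ IGraph V0 f) :
    ∀ x z t : ℝ,
      f (x + t, 0, z - t * f (x, 0, z) - t ^ 2 * m / 2) = f (x, 0, z) + t * m := by
  intro x z t
  set y := f (x, 0, z) with hy
  have hp : ((x, y, z + x * y / 2) : H) ∈ IGraph V0 f := ⟨x, z, rfl, rfl⟩
  obtain ⟨q, ⟨s, hs⟩, hsub⟩ := hruled _ hp
  have hr : Hmul (x, y, z + x * y / 2) (t, t * m, 0) ∈ IGraph V0 f := by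
    apply hsub
    refine ⟨s + t, ?_⟩
    rw [hs]
    simp only [Hmul, Prod.mk.injEq]
    refine ⟨by ring, by ring, by ring⟩
  rw [mem_IGraph_iff] at hr
  simp only [Hmul] at hr
  have harg : z + x * y / 2 + 0 + (x * (t * m) - y * t) / 2 -
      (x + t) * (y + t * m) / 2 = z - t * y - t ^ 2 * m / 2 := by ring
  rw [harg] at hr
  linarith [hr]

/-- if every point of `Γ_f` lies on a horizontal line of slope `m`
contained in `Γ_f`, then `Γ_f` is a vertical plane: `f(x,0,z) = m x + c`. -/
theorem constant_slope_implies_plane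
    (m : ℝ) (f : H → ℝ)
    (hruled : ∀ p ∈ IGraph V0 f, ∃ q : H,
      p ∈ horizLine q m ∧ horizLine q m ⊆ IGraph V0 f) :
    ∃ c : ℝ, (∀ x z : ℝ, f (x, 0, z) = m * x + c) ∧
      IGraph V0 f = {p : H | p.2.1 = m * p.1 + c} := by
  have key := key_translate m f hruled
  -- f (0,0,·) is constant
  have hconst : ∀ z : ℝ, f (0, 0, z) = f (0, 0, 0) := by
    have h2 : ∀ z1 z2 : ℝ, f (0, 0, z1) = f (0, 0, z2) := by
      intro z1 z2
      by_contra hab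
      set a := f (0, 0, z1) with ha
      set b := f (0, 0, z2) with hb
      have hba : b - a ≠ 0 := fun h => hab (by linarith [sub_eq_zero.mp h])
      set t := (z2 - z1) / (b - a) with ht
      have harg : z1 - t * a - t ^ 2 * m / 2 = z2 - t * b - t ^ 2 * m / 2 := by
        have : t * (b - a) = z2 - z1 := by
          rw [ht]; field_simp
        nlinarith [this]
      have e1 := key 0 z1 t
      have e2 := key 0 z2 t
      rw [zero_add] at e1 e2
      rw [← ha] at e1
      rw [← hb] at e2
      rw [harg, e2] at e1
      exact hab (by linarith)
    intro z; exact h2 z 0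
  set c := f (0, 0, 0) with hc
  refine ⟨c, ?_, ?_⟩
  · intro x z
    have e := key 0 (z + x * c + x ^ 2 * m / 2) x
    rw [zero_add, hconst] at e
    have harg : z + x * c + x ^ 2 * m / 2 - x * c - x ^ 2 * m / 2 = z := by ring
    rw [harg] at e
    rw [e]; ring
  · ext p
    rw [mem_IGraph_iff]
    have e := key 0 ((p.2.2 - p.1 * p.2.1 / 2) + p.1 * c + p.1 ^ 2 * m / 2) p.1
    rw [zero_add, hconst] at e
    have harg : (p.2.2 - p.1 * p.2.1 / 2) + p.1 * c + p.1 ^ 2 * m / 2 - p.1 * c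
        - p.1 ^ 2 * m / 2 = p.2.2 - p.1 * p.2.1 / 2 := by ring
    rw [harg] at e
    simp only [Set.mem_setOf_eq, e]
    constructor <;> intro h <;> linarith
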